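/- Let φ : ℝ → ℝ be three times continuously differentiable with |φ'''(x)| ≤ K3 for all x, and let β > 0, μ0, δr ∈ ℝ be such that the hybrid h is a well-defined probability measure with finite mean μ_h and finite variance v_h > 0, φ' is h-integrable, and the unnormalized density tends to 0 at ±∞. Then the site parameters r_site := μ_h/v_h − (β μ0 − δr) and β_site := v_h⁻¹ − β satisfy |r_site − β_site·μ0 + φ'(μ0) − (β_site − φ''(μ0))·(μ_h − μ0)| ≤ (K3/2)·(v_h + (μ_h − μ0)²). -/

import Mathlib

open MeasureTheory Real Filter
open scoped ENNReal NNReal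

noncomputable section

/-- Unnormalized density of the hybrid distribution:
`l(x) · exp(−(β/2)x² + (β μ0 − δr)x)` with `l = exp (−φ)`. -/
def hybridDens (φ : ℝ → ℝ) (β μ0 δr : ℝ) (x : ℝ) : ℝ :=
  Real.exp (-(φ x) - β / 2 * x ^ 2 + (β * μ0 - δr) * x)

/-- The hybrid distribution: the normalized measure with density
proportional to `hybridDens`. -/
def hybrid (φ : ℝ → ℝ) (β μ0 δr : ℝ) : Measure ℝ :=
  ((volume.withDensity fun x => ENNReal.ofReal (hybridDens φ β μ0 δr x)) Set.univ)⁻¹ •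
    (volume.withDensity fun x => ENNReal.ofReal (hybridDens φ β μ0 δr x))

/-- Mean of the hybrid distribution. -/
def hybridMean (φ : ℝ → ℝ) (β μ0 δr : ℝ) : ℝ :=
  ∫ x, x ∂(hybrid φ β μ0 δr)

/-- Variance of the hybrid distribution. -/
def hybridVar (φ : ℝ → ℝ) (β μ0 δr : ℝ) : ℝ :=
  ∫ x, (x - hybridMean φ β μ0 δr) ^ 2 ∂(hybrid φ β μ0 δr)

lemma taylor_aux {g : ℝ → ℝ} {K : ℝ} (hg : ContDiff ℝ 2 g)
    (hK : ∀ x, |deriv (deriv g) x| ≤ K) (a x : ℝ) :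
    |g x - g a - deriv g a * (x - a)| ≤ K / 2 * (x - a) ^ 2 := by
  have hg1 : ContDiff ℝ 1 (deriv g) := (contDiff_succ_iff_deriv.mp hg).2.2
  have hgd : Differentiable ℝ g := hg.differentiable (by norm_num)
  have hg1d : Differentiable ℝ (deriv g) := hg1.differentiable (by norm_num)
  have hlip : ∀ t, |deriv g t - deriv g a| ≤ K * |t - a| := by
    intro t
    simpa [Real.norm_eq_abs] using
      Convex.norm_image_sub_le_of_norm_deriv_le (s := Set.univ) (f := deriv g)
        (fun y _ => hg1d y) (fun y _ => by simpa [Real.norm_eq_abs] using hK y)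
        convex_univ (Set.mem_univ a) (Set.mem_univ t)
  have hcont : Continuous (deriv g) := hg1.continuous
  have hfund : g x - g a = ∫ t in a..x, deriv g t :=
    (intervalIntegral.integral_deriv_eq_sub (fun y _ => hgd y)
      (hcont.intervalIntegrable a x)).symm
  have hconst : deriv g a * (x - a) = ∫ t in a..x, deriv g a := by
    simp [mul_comm]
  have key : g x - g a - deriv g a * (x - a) = ∫ t in a..x, (deriv g t - deriv g a) := by
    rw [hfund, hconst, intervalIntegral.integral_sub (hcont.intervalIntegrable a x)
      intervalIntegrable_const]
  rw [key]
  have hK0 : 0 ≤ K := (abs_nonneg _).trans (hK a)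
  have hbound : |∫ t in a..x, (deriv g t - deriv g a)| ≤ abs (∫ t in a..x, K * abs (t - a)) := by
    have h1 : ∀ᵐ t ∂(volume.restrict (Set.uIoc a x)), ‖deriv g t - deriv g a‖ ≤ K * abs (t - a) :=
      Filter.Eventually.of_forall (fun t => by simpa [Real.norm_eq_abs] using hlip t)
    have h2 : IntervalIntegrable (fun t => K * abs (t - a)) volume a x :=
      (continuous_const.mul ((continuous_id.sub continuous_const).abs)).intervalIntegrable a x
    simpa [Real.norm_eq_abs] using intervalIntegral.norm_integral_le_abs_of_norm_le h1 h2
  have hI : ∫ t in a..x, (t - a) = (x - a) ^ 2 / 2 := by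
    rw [intervalIntegral.integral_comp_sub_right (fun t => t) a, integral_id]
    ring
  refine hbound.trans ?_
  rcases le_total a x with hax | hxa
  · have heq : ∫ t in a..x, K * abs (t - a) = K / 2 * (x - a) ^ 2 := by
      rw [intervalIntegral.integral_congr (g := fun t => K * (t - a)) ?_]
      · rw [intervalIntegral.integral_const_mul, hI]; ring
      · intro t ht
        rw [Set.uIcc_of_le hax] at ht
        simp only
        rw [abs_of_nonneg (by linarith [ht.1])]
    rw [heq, abs_of_nonneg (mul_nonneg (by linarith) (sq_nonneg _))]
  · have hI' : ∫ t in a..x, (a - t) = -((x - a) ^ 2 / 2) := by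
      have he : (fun t : ℝ => a - t) = fun t => -(t - a) := by funext t; ring
      rw [he, intervalIntegral.integral_neg, hI]
    have heq : ∫ t in a..x, K * abs (t - a) = -(K / 2 * (x - a) ^ 2) := by
      rw [intervalIntegral.integral_congr (g := fun t => K * (a - t)) ?_]
      · rw [intervalIntegral.integral_const_mul, hI']; ring
      · intro t ht
        rw [Set.uIcc_of_ge hxa] at ht
        simp only
        rw [abs_of_nonpos (by linarith [ht.2])]
        ring
    rw [heq, abs_neg, abs_of_nonneg (mul_nonneg (by linarith) (sq_nonneg _))]

lemma hybrid_deriv_integral (φ : ℝ → ℝ) (β μ0 δr : ℝ) (hφ : ContDiff ℝ 3 φ)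
    (hprob : IsProbabilityMeasure (hybrid φ β μ0 δr))
    (hmean : Integrable (fun x => x) (hybrid φ β μ0 δr))
    (hd : Integrable (fun x => deriv φ x) (hybrid φ β μ0 δr))
    (htop : Tendsto (fun x => hybridDens φ β μ0 δr x) atTop (nhds 0))
    (hbot : Tendsto (fun x => hybridDens φ β μ0 δr x) atBot (nhds 0)) :
    ∫ x, deriv φ x ∂(hybrid φ β μ0 δr)
      = (β * μ0 - δr) - β * ∫ x, x ∂(hybrid φ β μ0 δr) := by
  set c := β * μ0 - δr with hc
  set g := hybridDens φ β μ0 δr with hg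
  have hgpos : ∀ x, 0 < g x := fun x => Real.exp_pos _
  have hφd : Differentiable ℝ φ := hφ.differentiable (by norm_num)
  have hgcont : Continuous g := by
    apply Real.continuous_exp.comp
    exact ((hφ.continuous.neg.sub (continuous_const.mul (continuous_pow 2))).add
      (continuous_const.mul continuous_id))
  have hgmeas : Measurable fun x => ENNReal.ofReal (g x) :=
    hgcont.measurable.ennreal_ofReal
  set ν := volume.withDensity fun x => ENNReal.ofReal (g x) with hν
  set Z := ν Set.univ with hZ
  have hZ1 : Z⁻¹ * Z = 1 := by
    have := hprob.measure_univ
    rw [show hybrid φ β μ0 δr = Z⁻¹ • ν from rfl, Measure.smul_apply, smul_eq_mul] at this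
    exact this
  have hZ0 : Z ≠ 0 := by rintro h; simp [h] at hZ1
  have hZt : Z ≠ ⊤ := by rintro h; simp [h] at hZ1
  have hint_iff : ∀ f : ℝ → ℝ, Integrable f (hybrid φ β μ0 δr) ↔
      Integrable (fun x => f x * g x) volume := by
    intro f
    rw [show hybrid φ β μ0 δr = Z⁻¹ • ν from rfl,
      integrable_smul_measure (ENNReal.inv_ne_zero.2 hZt)
        (by simp [ENNReal.inv_ne_top, hZ0]),
      hν, integrable_withDensity_iff hgmeas
        (Filter.Eventually.of_forall fun x => ENNReal.ofReal_lt_top)]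
    simp only [ENNReal.toReal_ofReal (hgpos _).le]
  have hint_eq : ∀ f : ℝ → ℝ, ∫ x, f x ∂(hybrid φ β μ0 δr)
      = Z⁻¹.toReal * ∫ x, f x * g x := by
    intro f
    rw [show hybrid φ β μ0 δr = Z⁻¹ • ν from rfl, integral_smul_measure]
    congr 1
    rw [hν, show (fun x => ENNReal.ofReal (g x)) = fun x => ((g x).toNNReal : ℝ≥0∞) from rfl,
      integral_withDensity_eq_integral_smul
        (hgcont.measurable.real_toNNReal) f]
    congr 1; funext x
    simp [NNReal.smul_def, Real.coe_toNNReal _ (hgpos x).le, mul_comm]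
  have hderiv : ∀ x, HasDerivAt g ((-(deriv φ x) - β * x + c) * g x) x := by
    intro x
    have h1 : HasDerivAt (fun x => -(φ x) - β / 2 * x ^ 2 + c * x)
        (-(deriv φ x) - β / 2 * (2 * x ^ 1) + c * 1) x :=
      (((hφd x).hasDerivAt.neg).sub ((hasDerivAt_pow 2 x).const_mul (β / 2))).add
        ((hasDerivAt_id x).const_mul c)
    have h2 := h1.exp
    convert h2 using 1
    · rfl
    simp only [hg, hybridDens, ← hc]
    ring
  have hint' : Integrable (fun x => (-(deriv φ x) - β * x + c) * g x) volume := by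
    rw [← hint_iff]
    exact (hd.neg.sub (hmean.const_mul β)).add (integrable_const c)
  have hzero : ∫ x, (-(deriv φ x) - β * x + c) * g x = 0 := by
    have := integral_of_hasDerivAt_of_tendsto hderiv hint' hbot htop
    simpa using this
  have key : ∫ x, (-(deriv φ x) - β * x + c) ∂(hybrid φ β μ0 δr) = 0 := by
    rw [hint_eq, hzero, mul_zero]
  have hii : Integrable (fun x => -(deriv φ x) - β * x) (hybrid φ β μ0 δr) :=
    hd.neg.sub (hmean.const_mul β)
  rw [integral_add hii (integrable_const c)] at key
  have e1 := integral_sub hd.neg (hmean.const_mul β)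
  simp only [integral_neg, Pi.neg_apply] at e1
  rw [integral_const] at key
  simp only [probReal_univ, ENNReal.toReal_one, smul_eq_mul, one_mul] at key
  have e2 : (∫ a, (fun x => -deriv φ x) a - (fun x => β * x) a ∂(hybrid φ β μ0 δr))
      = ∫ a, -deriv φ a - β * a ∂(hybrid φ β μ0 δr) := rfl
  rw [e2] at e1
  rw [e1] at key
  have e3 : ∫ a, β * a ∂(hybrid φ β μ0 δr) = β * ∫ a, a ∂(hybrid φ β μ0 δr) := by
    simpa [smul_eq_mul] using integral_smul β (fun a : ℝ => a) (μ := hybrid φ β μ0 δr)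
  rw [e3] at key
  linarith

/-- Taylor-expansion bound for the site linear shift.  If `φ` is C³
with `|φ'''| ≤ K3`, the hybrid is a well-defined probability measure with finite
mean `μ_h` and finite variance `v_h > 0`, `φ'` is `h`-integrable, and the
unnormalized density vanishes at `±∞`, then, with `r_site := μ_h/v_h − (β μ0 − δr)`
and `β_site := v_h⁻¹ − β`,
`|r_site − β_site μ0 + φ'(μ0) − (β_site − φ''(μ0))(μ_h − μ0)| ≤ (K3/2)(v_h + (μ_h − μ0)²)`. -/
theorem site_linear_shift_taylor_bound
    (φ : ℝ → ℝ) (K3 : ℝ) (hφ : ContDiff ℝ 3 φ)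
    (hK3 : ∀ x, |iteratedDeriv 3 φ x| ≤ K3)
    (β μ0 δr : ℝ) (hβ : 0 < β)
    (hprob : IsProbabilityMeasure (hybrid φ β μ0 δr))
    (hmean : Integrable (fun x => x) (hybrid φ β μ0 δr))
    (hm2 : Integrable (fun x => x ^ 2) (hybrid φ β μ0 δr))
    (hvar : 0 < hybridVar φ β μ0 δr)
    (hd : Integrable (fun x => deriv φ x) (hybrid φ β μ0 δr))
    (htop : Tendsto (fun x => hybridDens φ β μ0 δr x) atTop (nhds 0))
    (hbot : Tendsto (fun x => hybridDens φ β μ0 δr x) atBot (nhds 0)) :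
    |(hybridMean φ β μ0 δr / hybridVar φ β μ0 δr - (β * μ0 - δr)) -
        ((hybridVar φ β μ0 δr)⁻¹ - β) * μ0 + deriv φ μ0 -
        (((hybridVar φ β μ0 δr)⁻¹ - β) - iteratedDeriv 2 φ μ0) *
          (hybridMean φ β μ0 δr - μ0)| ≤
      K3 / 2 * (hybridVar φ β μ0 δr + (hybridMean φ β μ0 δr - μ0) ^ 2) := by
  have hD := hybrid_deriv_integral φ β μ0 δr hφ hprob hmean hd htop hbot
  set h := hybrid φ β μ0 δr with hh
  set μ := hybridMean φ β μ0 δr with hμ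
  set v := hybridVar φ β μ0 δr with hv
  have hμdef : ∫ x, x ∂h = μ := rfl
  have hvdef : ∫ x, (x - μ) ^ 2 ∂h = v := rfl
  set c := β * μ0 - δr with hc
  set D := ∫ x, deriv φ x ∂h with hDdef
  rw [hμdef] at hD
  -- iterated derivative identities
  have hit2 : iteratedDeriv 2 φ = deriv (deriv φ) := by
    rw [show (2 : ℕ) = 1 + 1 from rfl, iteratedDeriv_succ, iteratedDeriv_one]
  have hit3 : iteratedDeriv 3 φ = deriv (deriv (deriv φ)) := by
    rw [show (3 : ℕ) = 2 + 1 from rfl, iteratedDeriv_succ, hit2]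
  set d2 := deriv (deriv φ) μ0 with hd2
  have hg2 : ContDiff ℝ 2 (deriv φ) := (contDiff_succ_iff_deriv.mp hφ).2.2
  have hK3' : ∀ x, |deriv (deriv (deriv φ)) x| ≤ K3 := by
    intro x; rw [← hit3]; exact hK3 x
  -- reduce the LHS expression
  have hvne : v ≠ 0 := ne_of_gt hvar
  have hval : (μ / v - c) - (v⁻¹ - β) * μ0 + deriv φ μ0 - ((v⁻¹ - β) - iteratedDeriv 2 φ μ0) * (μ - μ0)
      = deriv φ μ0 + d2 * (μ - μ0) - D := by
    rw [hit2, ← hd2, hD]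
    field_simp
    ring
  rw [hval]
  -- express as an integral
  have h1 : IsProbabilityMeasure h := hprob
  have hconst : ∀ r : ℝ, ∫ _x, r ∂h = r := by
    intro r; rw [integral_const]; simp [h1.measure_univ]
  have hlin : Integrable (fun x => d2 * (x - μ0)) h := by
    have : (fun x => d2 * (x - μ0)) = fun x => d2 * x - d2 * μ0 := by funext x; ring
    rw [this]
    exact (hmean.const_mul d2).sub (integrable_const _)
  have hlin_int : ∫ x, d2 * (x - μ0) ∂h = d2 * (μ - μ0) := by
    have e : (fun x => d2 * (x - μ0)) = fun x => d2 * x - d2 * μ0 := by funext x; ring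
    rw [e, integral_sub (hmean.const_mul d2) (integrable_const _), hconst]
    have e3 : ∫ a, d2 * a ∂h = d2 * ∫ a, a ∂h := by
      simpa [smul_eq_mul] using integral_smul d2 (fun a : ℝ => a) (μ := h)
    rw [e3, hμdef]
    ring
  have hF : Integrable (fun x => deriv φ μ0 + d2 * (x - μ0) - deriv φ x) h :=
    ((integrable_const _).add hlin).sub hd
  have hF1 : Integrable (fun x => deriv φ μ0 + d2 * (x - μ0)) h :=
    (integrable_const _).add hlin
  have hFint : ∫ x, (deriv φ μ0 + d2 * (x - μ0) - deriv φ x) ∂h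
      = deriv φ μ0 + d2 * (μ - μ0) - D := by
    have t1 : ∫ x, (deriv φ μ0 + d2 * (x - μ0) - deriv φ x) ∂h
        = (∫ x, (deriv φ μ0 + d2 * (x - μ0)) ∂h) - ∫ x, deriv φ x ∂h :=
      integral_sub hF1 hd
    have t2 : ∫ x, (deriv φ μ0 + d2 * (x - μ0)) ∂h
        = (∫ _x, deriv φ μ0 ∂h) + ∫ x, d2 * (x - μ0) ∂h :=
      integral_add (integrable_const _) hlin
    rw [t1, t2, hconst, hlin_int, ← hDdef]
  rw [← hFint]
  -- quadratic integrability
  have hq0 : ∀ m : ℝ, Integrable (fun x => (x - m) ^ 2) h := by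
    intro m
    have e : (fun x : ℝ => (x - m) ^ 2) = fun x => x ^ 2 - (2 * m) * x + m ^ 2 := by
      funext x; ring
    rw [e]
    exact (hm2.sub (hmean.const_mul _)).add (integrable_const _)
  have hq_int : ∫ x, (x - μ0) ^ 2 ∂h = v + (μ - μ0) ^ 2 := by
    have e : (fun x : ℝ => (x - μ0) ^ 2) = fun x => (x - μ) ^ 2 + ((2 * (μ - μ0)) * x + (μ0 ^ 2 - μ ^ 2)) := by
      funext x; ring
    have hlin2 : Integrable (fun x => 2 * (μ - μ0) * x + (μ0 ^ 2 - μ ^ 2)) h :=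
      (hmean.const_mul _).add (integrable_const _)
    have t1 : ∫ x, ((x - μ) ^ 2 + (2 * (μ - μ0) * x + (μ0 ^ 2 - μ ^ 2))) ∂h
        = (∫ x, (x - μ) ^ 2 ∂h) + ∫ x, (2 * (μ - μ0) * x + (μ0 ^ 2 - μ ^ 2)) ∂h :=
      integral_add (hq0 μ) hlin2
    have t2 : ∫ x, (2 * (μ - μ0) * x + (μ0 ^ 2 - μ ^ 2)) ∂h
        = (∫ x, 2 * (μ - μ0) * x ∂h) + ∫ _x, (μ0 ^ 2 - μ ^ 2) ∂h :=
      integral_add (hmean.const_mul _) (integrable_const _)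
    have e3 : ∫ a, 2 * (μ - μ0) * a ∂h = 2 * (μ - μ0) * ∫ a, a ∂h := by
      simpa [smul_eq_mul] using integral_smul (2 * (μ - μ0)) (fun a : ℝ => a) (μ := h)
    rw [e, t1, t2, e3, hconst, hvdef, hμdef]
    ring
  -- final bound
  have hptw : ∀ x, |deriv φ μ0 + d2 * (x - μ0) - deriv φ x| ≤ K3 / 2 * (x - μ0) ^ 2 := by
    intro x
    have := taylor_aux hg2 hK3' μ0 x
    rw [show deriv φ μ0 + d2 * (x - μ0) - deriv φ x
      = -(deriv φ x - deriv φ μ0 - deriv (deriv φ) μ0 * (x - μ0)) from by rw [← hd2]; ring,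
      abs_neg]
    exact this
  calc |∫ x, (deriv φ μ0 + d2 * (x - μ0) - deriv φ x) ∂h|
      ≤ ∫ x, |deriv φ μ0 + d2 * (x - μ0) - deriv φ x| ∂h := by
        simpa [Real.norm_eq_abs] using
          norm_integral_le_integral_norm (μ := h) (f := fun x => deriv φ μ0 + d2 * (x - μ0) - deriv φ x)
    _ ≤ ∫ x, K3 / 2 * (x - μ0) ^ 2 ∂h := by
        refine integral_mono hF.abs ((hq0 μ0).const_mul _) ?_
        intro x
        exact hptw x
    _ = K3 / 2 * (v + (μ - μ0) ^ 2) := by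
        have e3 : ∫ a, K3 / 2 * (a - μ0) ^ 2 ∂h = K3 / 2 * ∫ a, (a - μ0) ^ 2 ∂h := by
          simpa [smul_eq_mul] using integral_smul (K3 / 2) (fun a : ℝ => (a - μ0) ^ 2) (μ := h)
        rw [e3, hq_int]
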